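/- Let X be a Rician-power random variable with density f_X(x) = ((1+K)/Ω) exp(-K - x(1+K)/Ω) I₀(2√(K(1+K)x/Ω)) for x ≥ 0, and let Y be independent exponential with rate μ. Then the CDF of Z = X/Y is F_Z(z) = Γ₁ (Γ₂ + μ/z)^{-1} · ₁F₁(1; 1; Γ₄ (Γ₂ + μ/z)^{-1}), where Γ₁ = ((1+K)/Ω) e^{-K}, Γ₂ = (1+K)/Ω, and Γ₄ = K(1+K)/Ω. -/

import Mathlib

open MeasureTheory ProbabilityTheory

/-- The modified Bessel function of the first kind of order 0. -/
noncomputable def besselI0 (t : ℝ) : ℝ :=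
  ∑' k : ℕ, (t / 2) ^ (2 * k) / ((k.factorial : ℝ)) ^ 2

lemma besselI0_two_sqrt (u : ℝ) (hu : 0 ≤ u) :
    besselI0 (2 * Real.sqrt u) = ∑' k : ℕ, u ^ k / ((k.factorial : ℝ)) ^ 2 := by
  unfold besselI0
  apply tsum_congr
  intro k
  congr 1
  rw [show (2:ℝ) * Real.sqrt u / 2 = Real.sqrt u by ring, pow_mul, Real.sq_sqrt hu]

lemma summable_pow_div_sq_factorial (u : ℝ) (hu : 0 ≤ u) :
    Summable (fun k : ℕ => u ^ k / ((k.factorial : ℝ)) ^ 2) := by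
  apply Summable.of_nonneg_of_le (fun k => by positivity)
    (fun k => ?_) (Real.summable_pow_div_factorial u)
  have h1 : (1 : ℝ) ≤ (k.factorial : ℝ) := by exact_mod_cast k.factorial_pos
  have h2 : (k.factorial : ℝ) ≤ ((k.factorial : ℝ)) ^ 2 := by nlinarith
  gcongr

/-- For `X` Rician-power distributed and `Y` independent exponential with rate `μ`,
the CDF of `Z = X/Y` is `Γ₁ (Γ₂ + μ/z)⁻¹ ₁F₁(1;1;Γ₄(Γ₂+μ/z)⁻¹)` (with `₁F₁(1;1;t) = eᵗ`). -/
theorem stmt_3 {Ω : Type*} [MeasurableSpace Ω] (P : Measure Ω) [IsProbabilityMeasure P]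
    (X Y : Ω → ℝ) (hX : Measurable X) (hY : Measurable Y)
    (K Ω_X μ : ℝ) (hK : 0 ≤ K) (hΩ : 0 < Ω_X) (hμ : 0 < μ)
    (hInd : IndepFun X Y P)
    (hXd : Measure.map X P = volume.withDensity (fun x =>
      if 0 ≤ x then
        ENNReal.ofReal (((1 + K) / Ω_X) * Real.exp (-K - x * (1 + K) / Ω_X) *
          besselI0 (2 * Real.sqrt (K * (1 + K) * x / Ω_X)))
      else 0))
    (hYd : ∀ y : ℝ, 0 ≤ y → (P {ω | Y ω ≤ y}).toReal = 1 - Real.exp (-μ * y))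
    (z : ℝ) (hz : 0 < z) :
    (P {ω | X ω / Y ω ≤ z}).toReal =
      (((1 + K) / Ω_X) * Real.exp (-K)) * ((1 + K) / Ω_X + μ / z)⁻¹ *
        Real.exp ((K * (1 + K) / Ω_X) * ((1 + K) / Ω_X + μ / z)⁻¹) := by
  have hK1 : (0:ℝ) < 1 + K := by linarith
  set Γ₂ : ℝ := (1 + K) / Ω_X with hΓ₂
  set Γ₄ : ℝ := K * (1 + K) / Ω_X with hΓ₄
  have hΓ₂pos : 0 < Γ₂ := div_pos hK1 hΩ
  have hΓ₄nn : 0 ≤ Γ₄ := by rw [hΓ₄]; exact div_nonneg (mul_nonneg hK hK1.le) hΩ.le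
  set a : ℝ := Γ₂ + μ / z with haa
  have ha : 0 < a := by
    have : 0 < μ / z := div_pos hμ hz
    rw [haa]; linarith
  set PX := Measure.map X P with hPX
  set PY := Measure.map Y P with hPY
  haveI : IsProbabilityMeasure PX := Measure.isProbabilityMeasure_map hX.aemeasurable
  haveI : IsProbabilityMeasure PY := Measure.isProbabilityMeasure_map hY.aemeasurable
  -- CDF of Y
  have hYIic : ∀ t : ℝ, 0 ≤ t → PY (Set.Iic t) = ENNReal.ofReal (1 - Real.exp (-μ * t)) := by
    intro t ht
    have h1 : PY (Set.Iic t) = P {ω | Y ω ≤ t} := by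
      rw [hPY, Measure.map_apply hY measurableSet_Iic]; rfl
    rw [h1, ← hYd t ht, ENNReal.ofReal_toReal (measure_ne_top P _)]
  have hY0 : P {ω | Y ω ≤ 0} = 0 := by
    have h := hYd 0 le_rfl
    simp only [mul_zero, Real.exp_zero, sub_self] at h
    rcases (ENNReal.toReal_eq_zero_iff _).mp h with h' | h'
    · exact h'
    · exact absurd h' (measure_ne_top P _)
  have hYIio : ∀ s : ℝ, 0 < s → PY (Set.Iio s) = ENNReal.ofReal (1 - Real.exp (-μ * s)) := by
    intro s hs
    have hU : Set.Iio s = ⋃ n : ℕ, Set.Iic (s - 1 / ((n:ℝ) + 1)) := by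
      ext y
      simp only [Set.mem_Iio, Set.mem_iUnion, Set.mem_Iic]
      constructor
      · intro hy
        obtain ⟨n, hn⟩ := exists_nat_one_div_lt (show (0:ℝ) < s - y by linarith)
        exact ⟨n, by linarith⟩
      · rintro ⟨n, hn⟩
        have : (0:ℝ) < 1 / ((n:ℝ) + 1) := by positivity
        linarith
    have hmono : Monotone (fun n : ℕ => Set.Iic (s - 1 / ((n:ℝ) + 1))) := by
      intro m n hmn
      apply Set.Iic_subset_Iic.mpr
      have hmn' : ((m:ℝ) + 1) ≤ ((n:ℝ) + 1) := by exact_mod_cast by omega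
      have : (1:ℝ) / ((n:ℝ) + 1) ≤ 1 / ((m:ℝ) + 1) :=
        one_div_le_one_div_of_le (by positivity) hmn'
      linarith
    rw [hU, hmono.directed_le.measure_iUnion]
    apply le_antisymm
    · apply iSup_le; intro n
      have hsub : Set.Iic (s - 1 / ((n:ℝ) + 1)) ⊆ Set.Iic s := by
        apply Set.Iic_subset_Iic.mpr
        have : (0:ℝ) < 1 / ((n:ℝ) + 1) := by positivity
        linarith
      calc PY (Set.Iic (s - 1 / ((n:ℝ) + 1))) ≤ PY (Set.Iic s) := measure_mono hsub
        _ = ENNReal.ofReal (1 - Real.exp (-μ * s)) := hYIic s hs.le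
    · have htend : Filter.Tendsto
          (fun n : ℕ => ENNReal.ofReal (1 - Real.exp (-μ * (s - 1 / ((n:ℝ) + 1)))))
          Filter.atTop (nhds (ENNReal.ofReal (1 - Real.exp (-μ * s)))) := by
        apply ENNReal.tendsto_ofReal
        have h1 : Filter.Tendsto (fun n : ℕ => s - 1 / ((n:ℝ) + 1)) Filter.atTop (nhds s) := by
          have h0 := tendsto_one_div_add_atTop_nhds_zero_nat (𝕜 := ℝ)
          have := Filter.Tendsto.const_sub s h0
          simpa using this
        have h2 := (Real.continuous_exp.tendsto _).comp (h1.const_mul (-μ))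
        have h3 := Filter.Tendsto.const_sub 1 h2
        simpa [Function.comp] using h3
      refine le_of_tendsto htend ?_
      have hev : ∀ᶠ n : ℕ in Filter.atTop, 0 ≤ s - 1 / ((n:ℝ) + 1) := by
        obtain ⟨N, hN⟩ := exists_nat_one_div_lt hs
        refine Filter.eventually_atTop.mpr ⟨N, fun n hn => ?_⟩
        have hNn : ((N:ℝ) + 1) ≤ ((n:ℝ) + 1) := by exact_mod_cast by omega
        have : (1:ℝ) / ((n:ℝ) + 1) ≤ 1 / ((N:ℝ) + 1) :=
          one_div_le_one_div_of_le (by positivity) hNn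
        linarith
      filter_upwards [hev] with n hn
      rw [← hYIic _ hn]
      exact le_iSup (fun n : ℕ => PY (Set.Iic (s - 1 / ((n:ℝ) + 1)))) n
  have hYIci : ∀ s : ℝ, 0 < s → PY (Set.Ici s) = ENNReal.ofReal (Real.exp (-μ * s)) := by
    intro s hs
    have hc : Set.Ici s = (Set.Iio s)ᶜ := Set.compl_Iio.symm
    have hq : 0 ≤ 1 - Real.exp (-μ * s) := by
      have : Real.exp (-μ * s) ≤ 1 := Real.exp_le_one_iff.mpr (by nlinarith)
      linarith
    rw [hc, measure_compl measurableSet_Iio (measure_ne_top _ _), measure_univ, hYIio s hs,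
      ← ENNReal.ofReal_one, ← ENNReal.ofReal_sub _ hq]
    congr 1
    ring
  -- rewrite the event
  have haeY : ∀ᵐ ω ∂P, 0 < Y ω := by
    rw [MeasureTheory.ae_iff]
    have hset : {ω | ¬ 0 < Y ω} = {ω | Y ω ≤ 0} := by ext ω; simp [not_lt]
    rw [hset]; exact hY0
  have hsetae : {ω | X ω / Y ω ≤ z} =ᵐ[P] {ω | X ω ≤ z * Y ω ∧ 0 < Y ω} := by
    apply Filter.eventuallyEq_set.mpr
    filter_upwards [haeY] with ω hω
    show X ω / Y ω ≤ z ↔ (X ω ≤ z * Y ω ∧ 0 < Y ω)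
    rw [div_le_iff₀ hω]
    constructor
    · intro h; exact ⟨by linarith [h], hω⟩
    · intro h; linarith [h.1]
  rw [measure_congr hsetae]
  -- product measure
  have hmap : Measure.map (fun ω => (X ω, Y ω)) P = PX.prod PY :=
    (indepFun_iff_map_prod_eq_prod_map_map hX.aemeasurable hY.aemeasurable).mp hInd
  have hS : MeasurableSet {p : ℝ × ℝ | p.1 ≤ z * p.2 ∧ 0 < p.2} :=
    (measurableSet_le measurable_fst (measurable_const.mul measurable_snd)).inter
      (measurableSet_lt measurable_const measurable_snd)
  have hPee : P {ω | X ω ≤ z * Y ω ∧ 0 < Y ω}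
      = (PX.prod PY) {p : ℝ × ℝ | p.1 ≤ z * p.2 ∧ 0 < p.2} := by
    rw [← hmap, Measure.map_apply (hX.prodMk hY) hS]; rfl
  rw [hPee, Measure.prod_apply hS]
  -- a.e. positivity under PX
  have hXpos : ∀ᵐ x ∂PX, 0 < x := by
    rw [MeasureTheory.ae_iff]
    have hset : {x : ℝ | ¬ 0 < x} = Set.Iic 0 := by ext x; simp [not_lt]
    rw [hset, hXd, withDensity_apply _ measurableSet_Iic,
      Measure.restrict_congr_set MeasureTheory.Iio_ae_eq_Iic.symm,
      setLIntegral_congr_fun measurableSet_Iio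
        (fun x (hx : x < 0) => if_neg (not_le.mpr hx)),
      lintegral_zero]
  have hinner : ∫⁻ x, PY (Prod.mk x ⁻¹' {p : ℝ × ℝ | p.1 ≤ z * p.2 ∧ 0 < p.2}) ∂PX
      = ∫⁻ x, ENNReal.ofReal (Real.exp (-(μ/z) * x)) ∂PX := by
    apply lintegral_congr_ae
    filter_upwards [hXpos] with x hx
    have hpre : Prod.mk x ⁻¹' {p : ℝ × ℝ | p.1 ≤ z * p.2 ∧ 0 < p.2} = Set.Ici (x / z) := by
      ext y
      simp only [Set.mem_preimage, Set.mem_setOf_eq, Set.mem_Ici]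
      constructor
      · rintro ⟨h1, _⟩
        rw [div_le_iff₀ hz]; linarith
      · intro h
        have hxy : x ≤ y * z := (div_le_iff₀ hz).mp h
        have hy : 0 < y := lt_of_lt_of_le (div_pos hx hz) h
        exact ⟨by linarith, hy⟩
    rw [hpre, hYIci _ (div_pos hx hz)]
    congr 1
    ring
  rw [hinner]
  -- the density as a series
  set fk : ℕ → ℝ → ENNReal := fun k x =>
    if 0 ≤ x then
      ENNReal.ofReal (Γ₂ * Real.exp (-K - x * (1 + K) / Ω_X) *
        ((Γ₄ * x) ^ k / ((k.factorial : ℝ)) ^ 2))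
    else 0 with hfk
  have hfeq : (fun x : ℝ =>
      if 0 ≤ x then
        ENNReal.ofReal (Γ₂ * Real.exp (-K - x * (1 + K) / Ω_X) *
          besselI0 (2 * Real.sqrt (K * (1 + K) * x / Ω_X)))
      else 0) = fun x => ∑' k : ℕ, fk k x := by
    funext x
    by_cases hx : 0 ≤ x
    · simp only [hfk, if_pos hx]
      have hu : 0 ≤ K * (1 + K) * x / Ω_X :=
        div_nonneg (mul_nonneg (mul_nonneg hK hK1.le) hx) hΩ.le
      have hux : K * (1 + K) * x / Ω_X = Γ₄ * x := by rw [hΓ₄]; ring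
      rw [besselI0_two_sqrt _ hu, hux]
      have hc : 0 ≤ Γ₂ * Real.exp (-K - x * (1 + K) / Ω_X) :=
        mul_nonneg hΓ₂pos.le (Real.exp_pos _).le
      have hux' : 0 ≤ Γ₄ * x := mul_nonneg hΓ₄nn hx
      rw [← tsum_mul_left]
      exact ENNReal.ofReal_tsum_of_nonneg
        (fun k => mul_nonneg hc (div_nonneg (pow_nonneg hux' k) (by positivity)))
        ((summable_pow_div_sq_factorial _ hux').mul_left _)
    · simp only [hfk, if_neg hx, tsum_zero]
  have hfkm : ∀ k : ℕ, Measurable (fk k) := by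
    intro k
    apply Measurable.ite measurableSet_Ici _ measurable_const
    apply Measurable.ennreal_ofReal
    fun_prop
  have hFm : Measurable (fun x => ∑' k : ℕ, fk k x) := Measurable.ennreal_tsum hfkm
  have hgm : Measurable (fun x : ℝ => ENNReal.ofReal (Real.exp (-(μ/z) * x))) := by
    apply Measurable.ennreal_ofReal; fun_prop
  rw [hXd, hfeq, lintegral_withDensity_eq_lintegral_mul volume hFm hgm]
  have hmul : (fun x => ((fun x => ∑' k : ℕ, fk k x) * fun x : ℝ =>
      ENNReal.ofReal (Real.exp (-(μ/z) * x))) x)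
      = fun x => ∑' k : ℕ, fk k x * ENNReal.ofReal (Real.exp (-(μ/z) * x)) := by
    funext x
    simp only [Pi.mul_apply]
    exact ENNReal.tsum_mul_right.symm
  rw [hmul, lintegral_tsum (f := fun k x => fk k x * ENNReal.ofReal (Real.exp (-(μ/z) * x)))
    (fun k => ((hfkm k).mul hgm).aemeasurable)]
  -- evaluate each integral
  have hCknn : ∀ k : ℕ, 0 ≤ Γ₂ * Real.exp (-K) * Γ₄ ^ k / ((k.factorial : ℝ)) ^ 2 :=
    fun k => div_nonneg (mul_nonneg (mul_nonneg hΓ₂pos.le (Real.exp_pos _).le)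
      (pow_nonneg hΓ₄nn k)) (by positivity)
  have hint : ∀ k : ℕ, ∫⁻ x, fk k x * ENNReal.ofReal (Real.exp (-(μ/z) * x))
      = ENNReal.ofReal ((Γ₂ * Real.exp (-K) * Γ₄ ^ k / ((k.factorial : ℝ)) ^ 2) *
          ((1/a) ^ (k+1) * (k.factorial : ℝ))) := by
    intro k
    set Ck : ℝ := Γ₂ * Real.exp (-K) * Γ₄ ^ k / ((k.factorial : ℝ)) ^ 2 with hCk
    have h1 : ∀ x : ℝ, fk k x * ENNReal.ofReal (Real.exp (-(μ/z) * x))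
        = Set.indicator (Set.Ici 0)
            (fun x => ENNReal.ofReal (Ck * (x ^ k * Real.exp (-(a * x))))) x := by
      intro x
      by_cases hx : 0 ≤ x
      · rw [Set.indicator_of_mem (Set.mem_Ici.mpr hx)]
        simp only [hfk, if_pos hx]
        have hux' : 0 ≤ Γ₄ * x := mul_nonneg hΓ₄nn hx
        have hnn : 0 ≤ Γ₂ * Real.exp (-K - x * (1 + K) / Ω_X) *
            ((Γ₄ * x) ^ k / ((k.factorial : ℝ)) ^ 2) :=
          mul_nonneg (mul_nonneg hΓ₂pos.le (Real.exp_pos _).le)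
            (div_nonneg (pow_nonneg hux' k) (by positivity))
        rw [← ENNReal.ofReal_mul hnn]
        congr 1
        have e1 : Real.exp (-K - x * (1 + K) / Ω_X) = Real.exp (-K) * Real.exp (-(Γ₂ * x)) := by
          rw [← Real.exp_add]
          congr 1
          rw [hΓ₂]; ring
        have e2 : Real.exp (-(a * x)) = Real.exp (-(Γ₂ * x)) * Real.exp (-(μ/z) * x) := by
          rw [← Real.exp_add]
          congr 1
          rw [haa]; ring
        rw [e1, e2, mul_pow, hCk]
        ring
      · rw [Set.indicator_of_notMem (by simpa using hx)]
        simp only [hfk, if_neg hx, zero_mul]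
    simp_rw [h1]
    rw [lintegral_indicator measurableSet_Ici,
      ← setLIntegral_congr MeasureTheory.Ioi_ae_eq_Ici]
    -- integrability
    have hbase : IntegrableOn (fun x : ℝ => x ^ k * Real.exp (-x)) (Set.Ioi (0:ℝ)) := by
      have h := Real.GammaIntegral_convergent (show (0:ℝ) < (k:ℝ) + 1 by positivity)
      apply h.congr_fun ?_ measurableSet_Ioi
      intro x hx
      show Real.exp (-x) * x ^ ((k:ℝ) + 1 - 1) = x ^ k * Real.exp (-x)
      rw [show ((k:ℝ) + 1) - 1 = (k:ℝ) by ring, Real.rpow_natCast]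
      ring
    have hcomp : IntegrableOn (fun x : ℝ => (a * x) ^ k * Real.exp (-(a * x)))
        (Set.Ioi (0:ℝ)) := by
      have h := (integrableOn_Ioi_comp_mul_left_iff
        (fun y : ℝ => y ^ k * Real.exp (-y)) 0 ha).mpr
      simpa [mul_zero] using h (by simpa [mul_zero] using hbase)
    have h2 : IntegrableOn (fun x : ℝ => x ^ k * Real.exp (-(a * x))) (Set.Ioi (0:ℝ)) := by
      have heq : (fun x : ℝ => (a ^ k)⁻¹ * ((a * x) ^ k * Real.exp (-(a * x))))
          = fun x : ℝ => x ^ k * Real.exp (-(a * x)) := by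
        funext x
        rw [mul_pow, ← mul_assoc, ← mul_assoc, inv_mul_cancel₀ (by positivity : (a:ℝ) ^ k ≠ 0)]
        ring
      rw [← heq]
      exact hcomp.const_mul _
    have hInt : IntegrableOn (fun x : ℝ => Ck * (x ^ k * Real.exp (-(a * x))))
        (Set.Ioi (0:ℝ)) := h2.const_mul Ck
    have hnn' : 0 ≤ᵐ[volume.restrict (Set.Ioi (0:ℝ))]
        (fun x : ℝ => Ck * (x ^ k * Real.exp (-(a * x)))) := by
      filter_upwards [ae_restrict_mem measurableSet_Ioi] with x hx
      have hx0 : (0:ℝ) < x := hx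
      have hCknn' : 0 ≤ Ck := by rw [hCk]; exact hCknn k
      exact mul_nonneg hCknn' (mul_nonneg (pow_nonneg hx0.le k) (Real.exp_pos _).le)
    rw [← MeasureTheory.ofReal_integral_eq_lintegral_ofReal hInt hnn']
    congr 1
    rw [MeasureTheory.integral_const_mul]
    congr 1
    have hrpow : (∫ x in Set.Ioi (0:ℝ), x ^ k * Real.exp (-(a * x)))
        = ∫ x in Set.Ioi (0:ℝ), x ^ ((k:ℝ)) * Real.exp (-(a * x)) :=
      setIntegral_congr_fun measurableSet_Ioi (fun x _ => by rw [Real.rpow_natCast])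
    rw [hrpow]
    have hG := Real.integral_rpow_mul_exp_neg_mul_Ioi
      (show (0:ℝ) < (k:ℝ) + 1 by positivity) ha
    rw [show ((k:ℝ) + 1) - 1 = (k:ℝ) by ring] at hG
    rw [hG, Real.Gamma_nat_eq_factorial k,
      show ((k:ℝ) + 1) = (((k+1 : ℕ)):ℝ) by push_cast; ring, Real.rpow_natCast]
  simp_rw [hint]
  have hd : ∀ k : ℕ, (Γ₂ * Real.exp (-K) * Γ₄ ^ k / ((k.factorial : ℝ)) ^ 2) *
      ((1/a) ^ (k+1) * (k.factorial : ℝ))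
      = (Γ₂ * Real.exp (-K) / a) * ((Γ₄ / a) ^ k / (k.factorial : ℝ)) := by
    intro k
    have hk0 : ((k.factorial : ℝ)) ≠ 0 := by positivity
    field_simp
    rw [div_pow, one_div_pow, pow_succ, mul_one_div, mul_div_mul_right _ _ ha.ne', hΓ₄, div_pow, div_pow]
  simp_rw [hd]
  have hEnn : 0 ≤ Γ₂ * Real.exp (-K) / a := div_nonneg
    (mul_nonneg hΓ₂pos.le (Real.exp_pos _).le) ha.le
  rw [← ENNReal.ofReal_tsum_of_nonneg
      (fun k => mul_nonneg hEnn
        (div_nonneg (pow_nonneg (div_nonneg hΓ₄nn ha.le) k) (by positivity)))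
      ((Real.summable_pow_div_factorial (Γ₄/a)).mul_left _),
    tsum_mul_left,
    show (∑' k : ℕ, (Γ₄ / a) ^ k / (k.factorial : ℝ)) = Real.exp (Γ₄ / a) from by
      rw [Real.exp_eq_exp_ℝ, NormedSpace.exp_eq_tsum_div],
    ENNReal.toReal_ofReal (mul_nonneg hEnn (Real.exp_pos _).le)]
  simp only [div_eq_mul_inv]
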